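/- Let d_k > 0 (k = 0,...,3) with Σ d_k = 1, and suppose β_k: (0,δ) → ℝ_{>0} and ζ: (0,δ) → ℝ_{≥0} satisfy ζ(Δx)/β_k(Δx)² = O(Δx⁴) for each k as Δx → 0⁺. Define α_k = d_k(1 + ζ/β_k²) and ω_k = α_k/Σ_q α_q. Then ω_k - d_k = O(Δx⁴) for each k. -/
import Mathlib


theorem weno7_sufficient_condition
    (d : Fin 4 → ℝ) (hd : ∀ k, 0 < d k) (hsum : ∑ k, d k = 1)
    (δ : ℝ) (hδ : 0 < δ)
    (β : Fin 4 → ℝ → ℝ) (ζ : ℝ → ℝ)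
    (hβ : ∀ k, ∀ Δx ∈ Set.Ioo (0:ℝ) δ, 0 < β k Δx)
    (hζ : ∀ Δx ∈ Set.Ioo (0:ℝ) δ, 0 ≤ ζ Δx)
    (hO : ∀ k, ∃ C : ℝ, ∀ Δx ∈ Set.Ioo (0:ℝ) δ, ζ Δx / (β k Δx)^2 ≤ C * Δx^4)
    (α ω : Fin 4 → ℝ → ℝ)
    (hα : ∀ k, ∀ Δx, α k Δx = d k * (1 + ζ Δx / (β k Δx)^2))
    (hω : ∀ k, ∀ Δx, ω k Δx = α k Δx / ∑ q, α q Δx) :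
    ∀ k, ∃ C δ' : ℝ, 0 < C ∧ 0 < δ' ∧ ∀ Δx : ℝ, 0 < Δx → Δx < δ' →
      |ω k Δx - d k| ≤ C * Δx^4 := by
  intro k
  choose C hC using hO
  set C' : Fin 4 → ℝ := fun q => |C q| + 1 with hC'def
  have hC'pos : ∀ q, 0 < C' q := fun q => by positivity
  have hC'bound : ∀ q, ∀ Δx ∈ Set.Ioo (0:ℝ) δ, ζ Δx / (β q Δx)^2 ≤ C' q * Δx^4 := by
    intro q Δx hx
    have h1 := hC q Δx hx
    have h2 : (0:ℝ) ≤ Δx^4 := by positivity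
    simp only [hC'def]
    nlinarith [le_abs_self (C q), h1, h2]
  have hsumpos : 0 < ∑ q, d q * C' q :=
    Finset.sum_pos (fun q _ => mul_pos (hd q) (hC'pos q)) ⟨0, Finset.mem_univ 0⟩
  refine ⟨d k * (C' k + ∑ q, d q * C' q), δ,
    mul_pos (hd k) (by linarith [hC'pos k]), hδ, ?_⟩
  intro Δx hx1 hx2
  have hmem : Δx ∈ Set.Ioo (0:ℝ) δ := ⟨hx1, hx2⟩
  set ε : Fin 4 → ℝ := fun q => ζ Δx / (β q Δx)^2 with hεdef
  have hε0 : ∀ q, 0 ≤ ε q := fun q =>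
    div_nonneg (hζ Δx hmem) (sq_nonneg _)
  have hεb : ∀ q, ε q ≤ C' q * Δx^4 := fun q => hC'bound q Δx hmem
  set T : ℝ := ∑ q, d q * ε q with hTdef
  have hT0 : 0 ≤ T :=
    Finset.sum_nonneg (fun q _ => mul_nonneg (hd q).le (hε0 q))
  have hTb : T ≤ (∑ q, d q * C' q) * Δx^4 := by
    rw [hTdef, Finset.sum_mul]
    exact Finset.sum_le_sum (fun q _ => by
      rw [mul_assoc]
      exact mul_le_mul_of_nonneg_left (hεb q) (hd q).le)
  have hS : ∑ q, α q Δx = 1 + T := by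
    have : ∀ q, α q Δx = d q + d q * ε q := fun q => by
      rw [hα]; ring
    simp only [this, Finset.sum_add_distrib, hsum, hTdef]
  have hSpos : (0:ℝ) < 1 + T := by linarith
  have key : ω k Δx - d k = d k * (ε k - T) / (1 + T) := by
    rw [hω, hα, hS]
    field_simp
    ring
  have habs : |ω k Δx - d k| = d k * |ε k - T| / (1 + T) := by
    rw [key, abs_div, abs_mul, abs_of_pos (hd k), abs_of_pos hSpos]
  rw [habs, div_le_iff₀ hSpos]
  have habs2 : |ε k - T| ≤ ε k + T := by
    rw [abs_sub_le_iff]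
    constructor <;> linarith [hε0 k]
  have hx4 : (0:ℝ) ≤ Δx^4 := by positivity
  nlinarith [hεb k, (hd k).le, mul_le_mul_of_nonneg_left habs2 (hd k).le,
    mul_nonneg (mul_pos (hd k) (by linarith [hC'pos k] : (0:ℝ) < C' k + ∑ q, d q * C' q)).le (mul_nonneg hx4 hT0)]
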